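/- For the PPM-style cost model in which compressing a string s of length m with k-th order context coding outputs m·H_k(s) + O(log m) bits: for T = (2^k 0)^{n/(2(k+1))} (2^k 1)^{n/(2(k+1))} over alphabet {0,1,2} (where 2^k denotes k repetitions of symbol 2), compressing the two halves of T separately costs O(log n) bits, while compressing T as a whole costs at least n/(k+1) + O(log n) bits; hence splitting improves the cost by a factor Ω(n/((k+1)·log n)). -/

import Mathlib

/-- `u_T`: the string of single symbols following the occurrences of `u` in `T`. -/
def following {α : Type*} [DecidableEq α] (T u : List α) : List α :=
  (List.range T.length).filterMap fun i =>
    if (T.drop i).take u.length = u then (T.drop (i + u.length)).head? else none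

/-- `|s|·H₀(s)`: zero-th order empirical entropy cost (bits). -/
noncomputable def nH0 {α : Type*} [DecidableEq α] (s : List α) : ℝ :=
  ∑ c ∈ s.toFinset, (s.count c : ℝ) * Real.logb 2 ((s.length : ℝ) / (s.count c : ℝ))

/-- `|T|·H_k(T) = Σ_{u ∈ Σ^k} |u_T|·H₀(u_T)`: `k`-th order entropy cost. -/
noncomputable def nHk {α : Type*} [Fintype α] [DecidableEq α] (k : ℕ) (T : List α) : ℝ :=
  ∑ u : Fin k → α, nH0 (following T (List.ofFn u))

/-! ### Arithmetic helpers -/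

lemma ppm_helper1 (k i : ℕ) (h : i % (k+1) ≠ 0) : ∃ d, d < k ∧ (i + d) % (k+1) = k := by
  have hr : i % (k+1) < k + 1 := Nat.mod_lt i (by omega)
  refine ⟨k - i % (k+1), by omega, ?_⟩
  have hk : k % (k+1) = k := Nat.mod_eq_of_lt (by omega)
  rw [Nat.add_mod]
  rw [Nat.mod_eq_of_lt (show k - i % (k+1) < k+1 by omega)]
  rw [show i % (k+1) + (k - i % (k+1)) = k by omega, hk]

lemma ppm_resid (k i : ℕ) (h : ∀ d, d < k → (i + d) % (k+1) ≠ k) : (i + k) % (k+1) = k := by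
  have h0 : i % (k+1) = 0 := by
    by_contra hne
    obtain ⟨d, hd, hdk⟩ := ppm_helper1 k i hne
    exact h d hd hdk
  have hk : k % (k+1) = k := Nat.mod_eq_of_lt (by omega)
  rw [Nat.add_mod, h0, hk, Nat.zero_add, hk]

lemma ppm_key (k i j : ℕ) (h : ∀ d, d < k → ((i+d) % (k+1) = k ↔ (j+d) % (k+1) = k)) :
    ((i+k) % (k+1) = k ↔ (j+k) % (k+1) = k) := by
  by_cases hc : ∃ d, d < k ∧ (i + d) % (k+1) = k
  · obtain ⟨d, hd, hdk⟩ := hc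
    have hj : (j + d) % (k+1) = k := (h d hd).mp hdk
    have hmod : i + d ≡ j + d [MOD k+1] := by unfold Nat.ModEq; rw [hdk, hj]
    have : i + k ≡ j + k [MOD k+1] := (Nat.ModEq.add_right_cancel' d hmod).add_right k
    unfold Nat.ModEq at this
    rw [this]
  · push_neg at hc
    have hi := ppm_resid k i fun d hd => hc d hd
    have hjh : ∀ d, d < k → (j + d) % (k+1) ≠ k := fun d hd hjd =>
      hc d hd ((h d hd).mpr hjd)
    have hj := ppm_resid k j hjh
    simp [hi, hj]

/-! ### General list lemmas -/

lemma ppm_flatten_replicate_getElem? {α : Type*} (l : List α) :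
    ∀ (m : ℕ) (p : ℕ),
      ((List.replicate m l).flatten)[p]? =
        if p < m * l.length then l[p % l.length]? else none := by
  intro m
  induction m with
  | zero => intro p; simp
  | succ m ih =>
    intro p
    rw [List.replicate_succ, List.flatten_cons, List.getElem?_append]
    by_cases hp : p < l.length
    · rw [if_pos hp, if_pos (by nlinarith [Nat.succ_mul m l.length]), Nat.mod_eq_of_lt hp]
    · rw [if_neg hp, ih (p - l.length)]
      push_neg at hp
      have h1 : (p - l.length) % l.length = p % l.length := (Nat.mod_eq_sub_mod hp).symm
      have h2 : (p - l.length < m * l.length) ↔ (p < (m+1) * l.length) := by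
        rw [Nat.succ_mul]; omega
      rw [h1]
      by_cases h3 : p < (m+1) * l.length
      · rw [if_pos (h2.mpr h3), if_pos h3]
      · rw [if_neg (fun hh => h3 (h2.mp hh)), if_neg h3]

lemma ppm_window_iff {α : Type*} [DecidableEq α] (L u : List α) (k i : ℕ)
    (hk : u.length = k) (hi : i ≤ L.length) :
    (L.drop i).take k = u ↔ (i + k ≤ L.length ∧ ∀ d, d < k → L[i+d]? = u[d]?) := by
  constructor
  · intro h
    have hlen : ((L.drop i).take k).length = k := by rw [h, hk]
    rw [List.length_take, List.length_drop] at hlen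
    have hik : i + k ≤ L.length := by omega
    refine ⟨hik, fun d hd => ?_⟩
    have := congrArg (fun s => s[d]?) h
    rw [List.getElem?_take, if_pos hd, List.getElem?_drop] at this
    exact this
  · rintro ⟨hik, h⟩
    apply List.ext_getElem?
    intro n
    by_cases hn : n < k
    · rw [List.getElem?_take, if_pos hn, List.getElem?_drop]
      exact h n hn
    · have h1 : ((L.drop i).take k).length ≤ n := by
        rw [List.length_take, List.length_drop]; omega
      rw [List.getElem?_eq_none h1, List.getElem?_eq_none (by omega)]

lemma ppm_mem_following {α : Type*} [DecidableEq α] {T u : List α} {a : α}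
    (h : a ∈ following T u) :
    ∃ i, i < T.length ∧ i + u.length < T.length ∧
      (T.drop i).take u.length = u ∧ T[i + u.length]? = some a := by
  rw [following, List.mem_filterMap] at h
  obtain ⟨i, hi, hfi⟩ := h
  rw [List.mem_range] at hi
  by_cases hw : (T.drop i).take u.length = u
  · rw [if_pos hw, List.head?_drop] at hfi
    have hlt : i + u.length < T.length := by
      by_contra hge
      rw [List.getElem?_eq_none (by omega)] at hfi
      cases hfi
    exact ⟨i, hi, hlt, hw, hfi⟩
  · rw [if_neg hw] at hfi; cases hfi

lemma ppm_nH0_nonneg {α : Type*} [DecidableEq α] (s : List α) : 0 ≤ nH0 s := by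
  apply Finset.sum_nonneg
  intro c hc
  have h1 : 0 < s.count c := List.count_pos_iff.mpr (List.mem_toFinset.mp hc)
  have h2 : s.count c ≤ s.length := List.count_le_length
  apply mul_nonneg (by positivity)
  apply Real.logb_nonneg (by norm_num)
  rw [le_div_iff₀ (by positivity)]
  simpa using (Nat.cast_le (α := ℝ)).mpr h2

lemma ppm_nH0_allEq {α : Type*} [DecidableEq α] (s : List α)
    (h : ∀ a ∈ s, ∀ b ∈ s, a = b) : nH0 s = 0 := by
  apply Finset.sum_eq_zero
  intro c hc
  have hc' : c ∈ s := List.mem_toFinset.mp hc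
  have hcount : s.count c = s.length := List.count_eq_length.mpr fun b hb => h c hc' b hb
  have hpos : 0 < s.count c := List.count_pos_iff.mpr hc'
  have hlen : 0 < s.length := hcount ▸ hpos
  have hlen' : (s.length : ℝ) ≠ 0 := by exact_mod_cast hlen.ne'
  rw [hcount, div_self hlen', Real.logb_one, mul_zero]

lemma ppm_filterMap_range_period {α : Type*} (P : ℕ) (hP : 0 < P) (c : ℕ → α)
    (f : ℕ → Option α) :
    ∀ q : ℕ, (∀ i, i < q * P → f i = if i % P = 0 then some (c (i / P)) else none) →
      (List.range (q * P)).filterMap f = (List.range q).map c := by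
  intro q
  induction q with
  | zero => simp
  | succ q ih =>
    intro hf
    have hsub : ∀ i, i < q * P → f i = if i % P = 0 then some (c (i / P)) else none := by
      intro i hi
      exact hf i (by rw [Nat.succ_mul]; omega)
    rw [Nat.succ_mul, List.range_add, List.filterMap_append, ih hsub]
    have hP1 : P = (P - 1) + 1 := by omega
    rw [List.filterMap_map]
    have hrp : List.range P = 0 :: (List.range (P-1)).map Nat.succ := by
      nth_rewrite 1 [hP1]
      rw [List.range_succ_eq_map]
    rw [hrp, List.filterMap_cons]
    have h0 : (f ∘ (q * P + ·)) 0 = some (c q) := by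
      simp only [Function.comp_apply, Nat.add_zero]
      rw [hf (q * P) (by rw [Nat.succ_mul]; omega)]
      rw [if_pos (Nat.mul_mod_left q P), Nat.mul_div_cancel q hP]
    rw [h0]
    have htail : ((List.range (P-1)).map Nat.succ).filterMap (f ∘ (q * P + ·)) = [] := by
      apply List.filterMap_eq_nil_iff.mpr
      intro a ha
      rw [List.mem_map] at ha
      obtain ⟨d, hd, rfl⟩ := ha
      rw [List.mem_range] at hd
      simp only [Function.comp_apply]
      rw [hf (q * P + d.succ) (by rw [Nat.succ_mul]; omega)]
      rw [if_neg]
      rw [Nat.add_mod, Nat.mul_mod_left, Nat.zero_add, Nat.mod_mod_of_dvd _ (dvd_refl P)]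
      rw [Nat.mod_eq_of_lt (by omega)]
      omega
    rw [htail, List.range_succ, List.map_append]
    simp

/-! ### The specific strings -/

lemma ppm_half_getElem? (k m : ℕ) (b : Fin 3) (p : ℕ) :
    ((List.replicate m (List.replicate k 2 ++ [b])).flatten)[p]? =
      if p < m * (k+1) then some (if p % (k+1) = k then b else 2) else none := by
  have hlen : (List.replicate k (2 : Fin 3) ++ [b]).length = k + 1 := by simp
  rw [ppm_flatten_replicate_getElem? _ m p, hlen]
  by_cases hp : p < m * (k+1)
  · rw [if_pos hp, if_pos hp]
    have hr : p % (k+1) < k + 1 := Nat.mod_lt p (by omega)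
    by_cases hk : p % (k+1) = k
    · rw [if_pos hk, hk, List.getElem?_append_right (by simp), List.length_replicate]
      simp
    · rw [if_neg hk, List.getElem?_append, List.length_replicate,
        if_pos (show p % (k+1) < k by omega), List.getElem?_replicate, if_pos (by omega)]
  · rw [if_neg hp, if_neg hp]

lemma ppm_half_length (k m : ℕ) (b : Fin 3) :
    ((List.replicate m (List.replicate k 2 ++ [b])).flatten).length = m * (k+1) := by
  rw [List.length_flatten, List.map_replicate]
  simp

/-- Each half has all context-followers constant, hence `nH0 = 0` for every context. -/
lemma ppm_half_allEq (k m : ℕ) (b : Fin 3) (hb : b ≠ 2) (u : List (Fin 3))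
    (hu : u.length = k) :
    nH0 (following ((List.replicate m (List.replicate k 2 ++ [b])).flatten) u) = 0 := by
  set H := (List.replicate m (List.replicate k 2 ++ [b])).flatten with hH
  have hHlen : H.length = m * (k+1) := ppm_half_length k m b
  apply ppm_nH0_allEq
  intro a ha a' ha'
  obtain ⟨i, hi, hik, hwin, hval⟩ := ppm_mem_following ha
  obtain ⟨j, hj, hjk, hwin', hval'⟩ := ppm_mem_following ha'
  rw [hu] at hik hwin hval hjk hwin' hval'
  rw [ppm_window_iff H u k i hu (le_of_lt hi)] at hwin
  rw [ppm_window_iff H u k j hu (le_of_lt hj)] at hwin'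
  -- values from getElem?
  have hg : ∀ d, d < k →
      ((i+d) % (k+1) = k ↔ (j+d) % (k+1) = k) := by
    intro d hd
    have h1 := hwin.2 d hd
    have h2 := hwin'.2 d hd
    have hi' : i + d < m * (k+1) := by rw [← hHlen]; omega
    have hj' : j + d < m * (k+1) := by rw [← hHlen]; omega
    rw [hH, ppm_half_getElem? k m b (i+d), if_pos hi'] at h1
    rw [hH, ppm_half_getElem? k m b (j+d), if_pos hj'] at h2
    have heq : (if (i+d) % (k+1) = k then b else 2) = (if (j+d) % (k+1) = k then b else 2) := by
      have := h1.trans h2.symm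
      exact Option.some_injective _ this
    constructor
    · intro hh
      by_contra hh'
      rw [if_pos hh, if_neg hh'] at heq
      exact hb heq
    · intro hh
      by_contra hh'
      rw [if_neg hh', if_pos hh] at heq
      exact hb heq.symm
  have hkey := ppm_key k i j hg
  have hi' : i + k < m * (k+1) := by rw [← hHlen]; omega
  have hj' : j + k < m * (k+1) := by rw [← hHlen]; omega
  rw [hH, ppm_half_getElem? k m b (i+k), if_pos hi'] at hval
  rw [hH, ppm_half_getElem? k m b (j+k), if_pos hj'] at hval'
  have ha1 : a = (if (i+k) % (k+1) = k then b else 2) := (Option.some_injective _ hval).symm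
  have ha2 : a' = (if (j+k) % (k+1) = k then b else 2) := (Option.some_injective _ hval').symm
  rw [ha1, ha2]
  by_cases hc : (i+k) % (k+1) = k
  · rw [if_pos hc, if_pos (hkey.mp hc)]
  · rw [if_neg hc, if_neg (fun hh => hc (hkey.mpr hh))]

lemma ppm_half_nHk (k m : ℕ) (b : Fin 3) (hb : b ≠ 2) :
    nHk k ((List.replicate m (List.replicate k 2 ++ [b])).flatten) = 0 := by
  apply Finset.sum_eq_zero
  intro u _
  exact ppm_half_allEq k m b hb (List.ofFn u) List.length_ofFn

/-- getElem? of the full string `T`. -/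
lemma ppm_T_getElem? (k m : ℕ) (p : ℕ) :
    (((List.replicate m (List.replicate k 2 ++ [0])).flatten ++
      (List.replicate m (List.replicate k 2 ++ [1])).flatten) : List (Fin 3))[p]? =
      if p < 2 * m * (k+1) then
        some (if p % (k+1) = k then (if p < m * (k+1) then 0 else 1) else 2)
      else none := by
  rw [show 2 * m * (k+1) = m * (k+1) + m * (k+1) from by ring]
  rw [List.getElem?_append, ppm_half_length k m 0]
  by_cases hp : p < m * (k+1)
  · rw [if_pos hp, ppm_half_getElem? k m 0 p, if_pos hp,
      if_pos (show p < m * (k+1) + m * (k+1) from by omega)]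
    by_cases hk : p % (k+1) = k
    · rw [if_pos hk, if_pos hk, if_pos hp]
    · rw [if_neg hk, if_neg hk]
  · rw [if_neg hp, ppm_half_getElem? k m 1 (p - m * (k+1))]
    push_neg at hp
    have hmod : (p - m * (k+1)) % (k+1) = p % (k+1) := by
      conv_rhs => rw [← Nat.sub_add_cancel hp]
      rw [Nat.add_mul_mod_self_right]
    rw [hmod]
    by_cases hq : p < m * (k+1) + m * (k+1)
    · rw [if_pos (show p - m * (k+1) < m * (k+1) from by omega), if_pos hq]
      by_cases hk : p % (k+1) = k
      · rw [if_pos hk, if_pos hk, if_neg (show ¬ p < m * (k+1) from by omega)]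
      · rw [if_neg hk, if_neg hk]
    · rw [if_neg (show ¬ p - m * (k+1) < m * (k+1) from by omega), if_neg hq]

/-- The followers of the all-`2` context in `T` are `0^m 1^m`. -/
lemma ppm_T_following (k m : ℕ) :
    following (((List.replicate m (List.replicate k 2 ++ [0])).flatten ++
      (List.replicate m (List.replicate k 2 ++ [1])).flatten) : List (Fin 3))
      (List.replicate k 2) =
      List.replicate m 0 ++ List.replicate m 1 := by
  set T : List (Fin 3) := (List.replicate m (List.replicate k 2 ++ [0])).flatten ++
      (List.replicate m (List.replicate k 2 ++ [1])).flatten with hT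
  have hTget : ∀ p, T[p]? =
      if p < 2 * m * (k+1) then
        some (if p % (k+1) = k then (if p < m * (k+1) then (0 : Fin 3) else 1) else 2)
      else none := fun p => ppm_T_getElem? k m p
  have hTlen : T.length = (2 * m) * (k+1) := by
    rw [hT, List.length_append, ppm_half_length, ppm_half_length]; ring
  simp only [following, List.length_replicate, hTlen]
  have hmain := ppm_filterMap_range_period (k+1) (by omega)
    (fun j => if j < m then (0 : Fin 3) else 1)
    (fun i => if (T.drop i).take k = List.replicate k 2
      then (T.drop (i + k)).head? else none) (2 * m) ?_
  · rw [hmain]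
    rw [show 2 * m = m + m from by ring, List.range_add, List.map_append]
    congr 1
    · apply List.eq_replicate_iff.mpr
      constructor
      · simp
      · intro c hc
        rw [List.mem_map] at hc
        obtain ⟨j, hj, rfl⟩ := hc
        rw [List.mem_range] at hj
        simp [hj]
    · rw [List.map_map]
      apply List.eq_replicate_iff.mpr
      constructor
      · simp
      · intro c hc
        rw [List.mem_map] at hc
        obtain ⟨j, hj, rfl⟩ := hc
        simp
  · -- the filterMap function has the periodic form
    intro i hi
    show (if (T.drop i).take k = List.replicate k 2 then (T.drop (i + k)).head? else none) =
      if i % (k+1) = 0 then some (if i / (k+1) < m then (0 : Fin 3) else 1) else none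
    have hi2 : i < 2 * m * (k+1) := by rw [show (2*m)*(k+1) = 2*m*(k+1) from by ring] at hi; exact hi
    have hiT : i ≤ T.length := by omega
    by_cases h0 : i % (k+1) = 0
    · -- a context position
      have hdvd : (k+1) ∣ i := Nat.dvd_of_mod_eq_zero h0
      have hij : (k+1) * (i / (k+1)) = i := Nat.mul_div_cancel' hdvd
      set j := i / (k+1) with hjdef
      have hj2m : j < 2 * m := by
        rw [hjdef]
        exact Nat.div_lt_of_lt_mul (by rw [show (k+1) * (2*m) = 2*m*(k+1) from by ring]; exact hi2)
      have hik : i + k < 2 * m * (k+1) := by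
        calc i + k < (k+1) * j + (k+1) := by omega
        _ = (j+1) * (k+1) := by ring
        _ ≤ 2 * m * (k+1) := Nat.mul_le_mul_right _ (by omega)
      have hwin : (T.drop i).take k = List.replicate k 2 := by
        rw [ppm_window_iff T (List.replicate k 2) k i List.length_replicate hiT]
        refine ⟨by omega, fun d hd => ?_⟩
        rw [hTget (i+d), if_pos (by omega)]
        have hmod : (i + d) % (k+1) = d := by
          rw [← hij, Nat.mul_add_mod, Nat.mod_eq_of_lt (by omega)]
        rw [hmod, if_neg (by omega), List.getElem?_replicate, if_pos hd]
      rw [if_pos hwin, if_pos h0, List.head?_drop, hTget (i+k), if_pos hik]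
      have hmodk : (i + k) % (k+1) = k := by
        rw [← hij, Nat.mul_add_mod, Nat.mod_eq_of_lt (by omega)]
      rw [if_pos hmodk]
      by_cases hjm : j < m
      · rw [if_pos (show i + k < m * (k+1) by
          calc i + k < (k+1) * j + (k+1) := by omega
          _ = (j+1) * (k+1) := by ring
          _ ≤ m * (k+1) := Nat.mul_le_mul_right _ (by omega)), if_pos hjm]
      · rw [if_neg (show ¬ (i + k < m * (k+1)) by
          push_neg
          calc m * (k+1) ≤ j * (k+1) := Nat.mul_le_mul_right _ (by omega)
          _ = (k+1) * j := by ring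
          _ ≤ i + k := by omega), if_neg hjm]
    · -- not a context position: window fails
      rw [if_neg h0, if_neg]
      intro hwin
      rw [ppm_window_iff T (List.replicate k 2) k i List.length_replicate hiT] at hwin
      obtain ⟨hik, hvals⟩ := hwin
      obtain ⟨d, hd, hdk⟩ := ppm_helper1 k i h0
      have hv := hvals d hd
      rw [hTget (i+d), if_pos (by omega), hdk, if_pos rfl,
        List.getElem?_replicate, if_pos hd] at hv
      have hv' := Option.some_injective _ hv
      by_cases hc : i + d < m * (k+1)
      · rw [if_pos hc] at hv'; exact absurd hv' (by decide)
      · rw [if_neg hc] at hv'; exact absurd hv' (by decide)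

/-- `nH0` of `0^m 1^m`. -/
lemma ppm_nH0_balanced (m : ℕ) (hm : 0 < m) :
    nH0 ((List.replicate m 0 ++ List.replicate m 1 : List (Fin 3))) = 2 * m := by
  set s : List (Fin 3) := List.replicate m 0 ++ List.replicate m 1 with hs
  have hfin : s.toFinset = {0, 1} := by
    rw [hs, List.toFinset_append, List.toFinset_replicate_of_ne_zero hm.ne',
      List.toFinset_replicate_of_ne_zero hm.ne']
    rfl
  have hlen : s.length = m + m := by simp [hs]
  have hc0 : s.count 0 = m := by
    rw [hs, List.count_append, List.count_replicate, List.count_replicate]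
    norm_num
  have hc1 : s.count 1 = m := by
    rw [hs, List.count_append, List.count_replicate, List.count_replicate]
    norm_num
  have hmr : (0:ℝ) < (m:ℝ) := by exact_mod_cast hm
  have hdiv : ((m + m : ℕ) : ℝ) / (m : ℝ) = 2 := by
    push_cast
    field_simp
    ring
  rw [nH0, hfin]
  rw [Finset.sum_insert (by decide), Finset.sum_singleton]
  rw [hc0, hc1, hlen, hdiv, Real.logb_self_eq_one (by norm_num)]
  push_cast
  ring

/-- Consider the PPM-style cost model in which compressing a
string `s` with `k`-th order context coding outputs `|s|·H_k(s) + O(log |s|)` bits.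
For `T = (2^k 0)^m (2^k 1)^m` over the alphabet `{0,1,2}` (where `2^k` is `k`
repetitions of symbol `2`, and `n = |T| = 2m(k+1)`): each half of `T` has `k`-th
order entropy cost `0` — so compressing the two halves separately costs `O(log n)`
bits — while the whole string has `n·H_k(T) ≥ n/(k+1)` — so compressing `T` at once
costs at least `n/(k+1) + O(log n)` bits; hence splitting improves the cost by a
factor `Ω(n/((k+1) log n))`. -/
theorem ppm_split_example (k m : ℕ) (hm : 0 < m) :
    let half0 : List (Fin 3) := (List.replicate m (List.replicate k 2 ++ [0])).flatten
    let half1 : List (Fin 3) := (List.replicate m (List.replicate k 2 ++ [1])).flatten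
    let T := half0 ++ half1
    (T.length : ℝ) = 2 * m * (k + 1) ∧
    nHk k half0 = 0 ∧ nHk k half1 = 0 ∧
    nHk k T ≥ (T.length : ℝ) / (k + 1) := by
  intro half0 half1 T
  have hTlen : T.length = 2 * m * (k+1) := by
    show (half0 ++ half1).length = _
    rw [List.length_append]
    show ((List.replicate m (List.replicate k 2 ++ [0])).flatten).length +
      ((List.replicate m (List.replicate k 2 ++ [1])).flatten).length = _
    rw [ppm_half_length, ppm_half_length]; ring
  refine ⟨?_, ?_, ?_, ?_⟩
  · rw [hTlen]; push_cast; ring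
  · exact ppm_half_nHk k m 0 (by decide)
  · exact ppm_half_nHk k m 1 (by decide)
  · have hbound : nH0 (following T (List.ofFn (fun _ : Fin k => (2 : Fin 3)))) ≤ nHk k T := by
      exact Finset.single_le_sum (f := fun u : Fin k → Fin 3 => nH0 (following T (List.ofFn u)))
        (fun u _ => ppm_nH0_nonneg _) (Finset.mem_univ _)
    rw [List.ofFn_const] at hbound
    have hfoll : following T (List.replicate k 2) =
        List.replicate m 0 ++ List.replicate m 1 := ppm_T_following k m
    rw [hfoll, ppm_nH0_balanced m hm] at hbound
    have hrhs : (T.length : ℝ) / (k + 1) = 2 * m := by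
      rw [hTlen]
      push_cast
      rw [mul_div_assoc, div_self (by positivity), mul_one]
    rw [hrhs]
    exact hbound
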